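/- Let C = {L_1, L_2, ...} be a countable collection of infinite languages over U. Suppose that for each index i there is a finite set T_i ⊆ L_i such that every L' ∈ C with T_i ⊆ L' and L' ⊊ L_i satisfies |L_i \ L'| < ∞, together with a nondecreasing sequence of finite sets T_i^{(1)} ⊆ T_i^{(2)} ⊆ ... whose union over n is T_i. Consider the algorithm which, at time n with input prefix having distinct-string set S_n, forms the index set C_n = {i : 1 ≤ i ≤ n, S_n ⊆ L_i, and T_i^{(n)} ⊆ S_n}; if C_n ≠ ∅ it lets g = min C_n and sets its generator G_n to enumerate L_g (so Z_{≥n} = L_g), and otherwise sets G_n arbitrarily. This algorithm exhaustively generates in the limit from C. -/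

import Mathlib

/-!
STATEMENT 12: Let C = {L_0, L_1, ...} (0-indexed) be a countable collection of
infinite languages over U.  Suppose each index i has a finite tell-tale T_i ⊆ L_i
satisfying the weak Angluin property, together with a nondecreasing sequence of
finite sets T_i^{(n)} whose union is T_i.  Consider the algorithm which, at time n
with distinct-input set S_n, forms C_n = {i : i < n, S_n ⊆ L_i, T_i^{(n)} ⊆ S_n};
if C_n ≠ ∅ it lets g = min C_n and its generator enumerates L_g (Z_{≥n} = L_g),
otherwise the generator is arbitrary.  This algorithm exhaustively generates in the
limit from C.
-/

/-- `x` is an enumeration of the language `K`. -/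
def IsEnumerationOf {U : Type} (K : Set U) (x : ℕ → U) : Prop :=
  (∀ t, x t ∈ K) ∧ ∀ w ∈ K, ∃ t, x t = w

/-- The set `S_t` of distinct strings among the first `t` inputs. -/
def seen {U : Type} (x : ℕ → U) (t : ℕ) : Set U := x '' {i | i < t}

/-- The input prefix `(x_1, ..., x_t)` as a list. -/
def inputList {U : Type} (x : ℕ → U) (t : ℕ) : List U :=
  List.ofFn (fun i : Fin t => x i)

/-- `Z_{<t}`: the distinct strings among `G_1(1), ..., G_{t-1}(1)`. -/
def ZltSet {U : Type} (A : List U → ℕ → U) (x : ℕ → U) (t : ℕ) : Set U :=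
  (fun s => A (inputList x s) 0) '' {s | 1 ≤ s ∧ s < t}

/-- `Z_{≥t}`: the distinct strings in `G_t(1), G_t(2), ...`. -/
def ZgeSet {U : Type} (A : List U → ℕ → U) (x : ℕ → U) (t : ℕ) : Set U :=
  Set.range (A (inputList x t))

/-- The algorithm `A` exhaustively generates in the limit from the collection `C`. -/
def ExhaustivelyGenerates {U : Type} (A : List U → ℕ → U) (C : Set (Set U)) : Prop :=
  ∀ K ∈ C, ∀ x : ℕ → U, IsEnumerationOf K x →
    ∃ tstar : ℕ, ∀ t : ℕ, tstar ≤ t →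
      (ZgeSet A x t \ K).Finite ∧ K ⊆ seen x t ∪ ZltSet A x t ∪ ZgeSet A x t

/-- Weak Angluin's Condition with Existence: every L ∈ C has a finite tell-tale
T ⊆ L such that every L' ∈ C with T ⊆ L' and L' ⊊ L satisfies |L \ L'| < ∞. -/
def WeakAngluinExistence {U : Type} (C : Set (Set U)) : Prop :=
  ∀ L ∈ C, ∃ T : Set U, T.Finite ∧ T ⊆ L ∧
    ∀ L' ∈ C, T ⊆ L' → L' ⊂ L → (L \ L').Finite

/-- The index set `C_n` computed by the algorithm from an input prefix `l`
(of length `n`): indices `i < n` with `S_n ⊆ L_i` and `T_i^{(n)} ⊆ S_n`. -/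
def Cidx {U : Type} (L : ℕ → Set U) (Tn : ℕ → ℕ → Set U) (l : List U) : Set ℕ :=
  {i : ℕ | i < l.length ∧ {u | u ∈ l} ⊆ L i ∧ Tn i l.length ⊆ {u | u ∈ l}}

theorem min_index_telltale_algorithm_exhaustively_generates
    (U : Type) [Countable U] [Infinite U]
    (L : ℕ → Set U) (hL : ∀ i, (L i).Infinite)
    (T : ℕ → Set U) (hTfin : ∀ i, (T i).Finite) (hTsub : ∀ i, T i ⊆ L i)
    (htell : ∀ i, ∀ L' ∈ Set.range L, T i ⊆ L' → L' ⊂ L i → (L i \ L').Finite)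
    (Tn : ℕ → ℕ → Set U) (hTnmono : ∀ i, Monotone (Tn i))
    (hTnunion : ∀ i, (⋃ n, Tn i n) = T i)
    (A : List U → ℕ → U)
    (hA : ∀ l : List U, (Cidx L Tn l).Nonempty →
      Set.range (A l) = L (sInf (Cidx L Tn l))) :
    ExhaustivelyGenerates A (Set.range L) := by
  classical
  rintro K ⟨k, rfl⟩ x ⟨hx1, hx2⟩
  have hlen : ∀ t, (inputList x t).length = t := fun t => List.length_ofFn
  have hmem : ∀ t, {u | u ∈ inputList x t} = seen x t := by
    intro t
    ext u
    constructor
    · intro hu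
      rw [Set.mem_setOf_eq, inputList, List.mem_ofFn] at hu
      obtain ⟨i, rfl⟩ := hu
      exact ⟨(i : ℕ), i.isLt, rfl⟩
    · rintro ⟨i, hi, rfl⟩
      rw [Set.mem_setOf_eq, inputList, List.mem_ofFn]
      exact ⟨⟨i, hi⟩, rfl⟩
  have hseenK : ∀ t, seen x t ⊆ L k := by
    rintro t _ ⟨i, _, rfl⟩; exact hx1 i
  -- finite subsets of K are eventually seen
  have hfin_seen : ∀ F : Set U, F.Finite → F ⊆ L k →
      ∃ N, ∀ t, N ≤ t → F ⊆ seen x t := by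
    intro F hF hFK
    set τ : U → ℕ := fun w => if h : w ∈ L k then Nat.find (hx2 w h) else 0 with hτ
    refine ⟨hF.toFinset.sup τ + 1, fun t ht w hw => ?_⟩
    have hwK : w ∈ L k := hFK hw
    have hx : x (τ w) = w := by
      simp only [hτ, dif_pos hwK]
      exact Nat.find_spec (hx2 w hwK)
    have : τ w < t := by
      have := Finset.le_sup (f := τ) (hF.mem_toFinset.mpr hw)
      omega
    exact ⟨τ w, this, hx⟩
  -- the minimal index g with K ⊆ L g and T g ⊆ K
  have hex : ∃ i, L k ⊆ L i ∧ T i ⊆ L k := ⟨k, subset_rfl, hTsub k⟩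
  set g := Nat.find hex with hg
  obtain ⟨hKg, hTgK⟩ : L k ⊆ L g ∧ T g ⊆ L k := Nat.find_spec hex
  -- T g eventually seen
  obtain ⟨N1, hN1⟩ := hfin_seen (T g) (hTfin g) hTgK
  -- Tn i n ⊆ T i
  have hTn_sub : ∀ i n, Tn i n ⊆ T i := by
    intro i n
    rw [← hTnunion i]
    exact Set.subset_iUnion (fun n => Tn i n) n
  -- bad indices i < g eventually excluded
  have hbad : ∀ i, i < g → ∃ N, ∀ t, N ≤ t → i ∉ Cidx L Tn (inputList x t) := by
    intro i hi
    have hnot : ¬ (L k ⊆ L i ∧ T i ⊆ L k) := Nat.find_min hex hi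
    by_cases hKi : L k ⊆ L i
    · -- then T i ⊄ L k
      have : ¬ T i ⊆ L k := fun h => hnot ⟨hKi, h⟩
      obtain ⟨u, huT, huK⟩ := Set.not_subset.mp this
      have : u ∈ ⋃ n, Tn i n := (hTnunion i).symm ▸ huT
      obtain ⟨n0, hn0⟩ := Set.mem_iUnion.mp this
      refine ⟨n0, fun t ht hiC => ?_⟩
      obtain ⟨_, _, hTn⟩ := hiC
      rw [hlen, hmem] at hTn
      exact huK (hseenK t (hTn (hTnmono i ht hn0)))
    · obtain ⟨w, hwK, hwi⟩ := Set.not_subset.mp hKi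
      obtain ⟨s, hs⟩ := hx2 w hwK
      refine ⟨s + 1, fun t ht hiC => ?_⟩
      obtain ⟨_, hSub, _⟩ := hiC
      rw [hmem] at hSub
      exact hwi (hSub ⟨s, ht, hs⟩)
  -- combine bad-index bounds
  set f : ℕ → ℕ := fun i => if h : i < g then (hbad i h).choose else 0 with hf
  set N2 := (Finset.range g).sup f with hN2
  have hN2spec : ∀ i, i < g → ∀ t, N2 ≤ t → i ∉ Cidx L Tn (inputList x t) := by
    intro i hi t ht
    have hfi : f i ≤ N2 := Finset.le_sup (Finset.mem_range.mpr hi)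
    have hfe : f i = (hbad i hi).choose := dif_pos hi
    exact (hbad i hi).choose_spec t (by rw [← hfe]; exact le_trans hfi ht)
  refine ⟨max (max (g + 1) N1) N2, fun t ht => ?_⟩
  have htg : g < t := lt_of_lt_of_le (lt_of_lt_of_le (Nat.lt_succ_self g) (le_max_left _ _)) (le_trans (le_max_left _ _) ht)
  have htN1 : N1 ≤ t := le_trans (le_trans (le_max_right _ _) (le_max_left _ _)) ht
  have htN2 : N2 ≤ t := le_trans (le_max_right _ _) ht
  -- g is in the candidate set
  have hgC : g ∈ Cidx L Tn (inputList x t) := by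
    refine ⟨by rw [hlen]; exact htg, ?_, ?_⟩
    · rw [hmem]; exact fun u hu => hKg (hseenK t hu)
    · rw [hlen, hmem]; exact fun u hu => hN1 t htN1 (hTn_sub g t hu)
  have hne : (Cidx L Tn (inputList x t)).Nonempty := ⟨g, hgC⟩
  have hinf : sInf (Cidx L Tn (inputList x t)) = g := by
    have hle : sInf (Cidx L Tn (inputList x t)) ≤ g := Nat.sInf_le hgC
    have hmemInf := Nat.sInf_mem hne
    rcases lt_or_eq_of_le hle with hlt | heq
    · exact absurd hmemInf (hN2spec _ hlt t htN2)
    · exact heq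
  have hZ : ZgeSet A x t = L g := by
    rw [ZgeSet, hA _ hne, hinf]
  constructor
  · rw [hZ]
    by_cases heq : L g = L k
    · rw [heq]
      simp
    · exact htell g (L k) ⟨k, rfl⟩ hTgK ⟨hKg, fun h => heq (le_antisymm h hKg)⟩
  · intro w hw
    exact Set.mem_union_right _ (hZ ▸ hKg hw)
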